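/- arXiv:2204.10833 — 4 statements merged into one kernel-verified Lean document; each statement's English description precedes it below -/
import Mathlib

section
/- Let g₀ : S¹ → ℝ² be a continuous map from the unit circle S¹ = {x ∈ ℝ² : ‖x‖ = 1} to ℝ², and let η > 0. Then there exists a continuous map g : S¹ → ℝ² such that ‖g(s)‖ < η and g(s) ≠ g₀(s) for every s ∈ S¹. -/
open Metric Set Real

noncomputable section

abbrev E2 := EuclideanSpace ℝ (Fin 2)
abbrev Sph : Set E2 := Metric.sphere (0 : E2) 1



lemma e2_norm_le_abs (x : EuclideanSpace ℝ (Fin 2)) : ‖x‖ ≤ |x 0| + |x 1| := by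
  rw [EuclideanSpace.norm_eq]
  simp only [Fin.sum_univ_two, Real.norm_eq_abs]
  have h1 : |x 0| ^ 2 + |x 1| ^ 2 ≤ (|x 0| + |x 1|) ^ 2 := by
    nlinarith [abs_nonneg (x 0), abs_nonneg (x 1)]
  calc √(|x 0| ^ 2 + |x 1| ^ 2) ≤ √((|x 0| + |x 1|) ^ 2) := Real.sqrt_le_sqrt h1
    _ = |x 0| + |x 1| := Real.sqrt_sq (by positivity)

lemma lipschitz_sin : LipschitzWith 1 Real.sin := by
  apply LipschitzWith.of_dist_le_mul
  intro a b
  rw [Real.dist_eq, Real.dist_eq, Real.sin_sub_sin]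
  have h1 : |Real.sin ((a-b)/2)| ≤ |(a-b)/2| := Real.abs_sin_le_abs
  have h2 : |Real.cos ((a+b)/2)| ≤ 1 := Real.abs_cos_le_one _
  have h3 : |(a-b)/2| = |a-b|/2 := by rw [abs_div]; norm_num
  rw [abs_mul, abs_mul]
  rw [h3] at h1
  have h4 := abs_nonneg (Real.sin ((a-b)/2))
  have h5 := abs_nonneg (Real.cos ((a+b)/2))
  have h6 := abs_nonneg (a-b)
  have h7 : |(2 : ℝ)| = 2 := by norm_num
  rw [h7, NNReal.coe_one]
  nlinarith

lemma lipschitz_cos : LipschitzWith 1 Real.cos := by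
  apply LipschitzWith.of_dist_le_mul
  intro a b
  rw [Real.dist_eq, Real.dist_eq, Real.cos_sub_cos]
  have h1 : |Real.sin ((a-b)/2)| ≤ |(a-b)/2| := Real.abs_sin_le_abs
  have h2 : |Real.sin ((a+b)/2)| ≤ 1 := Real.abs_sin_le_one _
  have h3 : |(a-b)/2| = |a-b|/2 := by rw [abs_div]; norm_num
  rw [abs_mul, abs_mul]
  rw [h3] at h1
  have h4 := abs_nonneg (Real.sin ((a-b)/2))
  have h5 := abs_nonneg (Real.sin ((a+b)/2))
  have h6 := abs_nonneg (a-b)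
  have h7 : |(-2 : ℝ)| = 2 := by norm_num
  rw [h7, NNReal.coe_one]
  nlinarith







-- coordinate continuous maps
def coordFn (i : Fin 2) : C(Sph, ℝ) :=
  ⟨fun s => (s : E2) i, by
    exact (continuous_apply i).comp ((PiLp.continuous_ofLp 2 _).comp continuous_subtype_val)⟩

def coordAlg : Subalgebra ℝ C(Sph, ℝ) := Algebra.adjoin ℝ (Set.range coordFn)

lemma coordAlg_sep : coordAlg.SeparatesPoints := by
  intro x y hxy
  have : (x : E2) ≠ (y : E2) := fun h => hxy (Subtype.ext h)
  rw [Ne, ← (WithLp.ofLp_injective 2).eq_iff, ← Ne, Function.ne_iff] at this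
  obtain ⟨i, hi⟩ := this
  exact ⟨(coordFn i : Sph → ℝ), ⟨coordFn i, Algebra.subset_adjoin ⟨i, rfl⟩, rfl⟩, hi⟩

lemma coordFn_lipschitz (i : Fin 2) : LipschitzWith 1 (coordFn i) := by
  apply LipschitzWith.of_dist_le_mul
  intro a b
  rw [NNReal.coe_one, one_mul, Subtype.dist_eq, EuclideanSpace.dist_eq]
  have : dist ((coordFn i) a) ((coordFn i) b) ^ 2 ≤ ∑ j, dist ((a:E2) j) ((b:E2) j) ^ 2 := by
    exact Finset.single_le_sum (f := fun j => dist ((a:E2) j) ((b:E2) j) ^ 2)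
      (fun j _ => by positivity) (Finset.mem_univ i)
  calc dist ((coordFn i) a) ((coordFn i) b)
      = √(dist ((coordFn i) a) ((coordFn i) b) ^ 2) := (Real.sqrt_sq dist_nonneg).symm
    _ ≤ √(∑ j, dist ((a:E2) j) ((b:E2) j) ^ 2) := Real.sqrt_le_sqrt this

lemma mem_coordAlg_lipschitz (f : C(Sph, ℝ)) (hf : f ∈ coordAlg) :
    ∃ K : NNReal, LipschitzWith K f := by
  induction hf using Algebra.adjoin_induction with
  | mem x hx => obtain ⟨i, rfl⟩ := hx; exact ⟨1, coordFn_lipschitz i⟩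
  | algebraMap r => exact ⟨0, by simpa using LipschitzWith.const (r : ℝ)⟩
  | add x y hx hy ihx ihy =>
      obtain ⟨K1, h1⟩ := ihx; obtain ⟨K2, h2⟩ := ihy
      exact ⟨K1 + K2, by rw [ContinuousMap.coe_add]; exact h1.add h2⟩
  | mul x y hx hy ihx ihy =>
      obtain ⟨K1, h1⟩ := ihx; obtain ⟨K2, h2⟩ := ihy
      refine ⟨K1 * ‖y‖₊ + ‖x‖₊ * K2, LipschitzWith.of_dist_le_mul fun a b => ?_⟩
      have hxb : |x b| ≤ ‖x‖ := x.norm_coe_le_norm b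
      have hya : |y a| ≤ ‖y‖ := y.norm_coe_le_norm a
      have d1 : dist (x a) (x b) ≤ K1 * dist a b := h1.dist_le_mul a b
      have d2 : dist (y a) (y b) ≤ K2 * dist a b := h2.dist_le_mul a b
      have : dist ((x*y) a) ((x*y) b) ≤ |y a| * dist (x a) (x b) + |x b| * dist (y a) (y b) := by
        simp only [ContinuousMap.mul_apply, Real.dist_eq]
        calc |x a * y a - x b * y b| = |(x a - x b) * y a + x b * (y a - y b)| := by ring_nf
          _ ≤ |(x a - x b) * y a| + |x b * (y a - y b)| := abs_add_le _ _
          _ = |y a| * |x a - x b| + |x b| * |y a - y b| := by rw [abs_mul, abs_mul]; ring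
      refine this.trans ?_
      push_cast
      have hb := dist_nonneg (x := a) (y := b)
      have h1' := dist_nonneg (x := x a) (y := x b)
      have h2' := dist_nonneg (x := y a) (y := y b)
      have hK1 : (0:ℝ) ≤ K1 := K1.coe_nonneg
      have hK2 : (0:ℝ) ≤ K2 := K2.coe_nonneg
      nlinarith [abs_nonneg (y a), abs_nonneg (x b), norm_nonneg x, norm_nonneg y]











def par (t : ℝ) : E2 := (WithLp.equiv 2 (Fin 2 → ℝ)).symm ![Real.cos t, Real.sin t]

@[simp] lemma par_zero (t : ℝ) : par t 0 = Real.cos t := rfl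
@[simp] lemma par_one (t : ℝ) : par t 1 = Real.sin t := rfl

lemma par_mem : ∀ t, par t ∈ Sph := by
  intro t
  rw [mem_sphere_zero_iff_norm, EuclideanSpace.norm_eq, Fin.sum_univ_two]
  simp only [par_zero, par_one, Real.norm_eq_abs, sq_abs]
  rw [Real.cos_sq_add_sin_sq]
  exact Real.sqrt_one

def parS (t : ℝ) : Sph := ⟨par t, par_mem t⟩

lemma parS_lipschitz : LipschitzWith 2 parS := by
  apply LipschitzWith.of_dist_le_mul
  intro a b
  rw [Subtype.dist_eq, dist_eq_norm]
  calc ‖par a - par b‖ ≤ |(par a - par b) 0| + |(par a - par b) 1| := e2_norm_le_abs _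
    _ = |Real.cos a - Real.cos b| + |Real.sin a - Real.sin b| := by
        simp [PiLp.sub_apply]
    _ ≤ |a - b| + |a - b| := by
        refine add_le_add ?_ ?_
        · simpa [Real.dist_eq] using lipschitz_cos.dist_le_mul a b
        · simpa [Real.dist_eq] using lipschitz_sin.dist_le_mul a b
    _ = (2:NNReal) * dist a b := by rw [Real.dist_eq]; push_cast; ring

lemma parS_surj : Function.Surjective parS := by
  rintro ⟨x, hx⟩
  rw [mem_sphere_zero_iff_norm, EuclideanSpace.norm_eq, Fin.sum_univ_two] at hx
  have hsum : x 0 ^ 2 + x 1 ^ 2 = 1 := by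
    have h0 : (0:ℝ) ≤ ‖x 0‖ ^ 2 + ‖x 1‖ ^ 2 := by positivity
    have := Real.sqrt_eq_one.mp hx
    simpa [Real.norm_eq_abs, sq_abs] using this
  have hx0 : -1 ≤ x 0 := by nlinarith
  have hx0' : x 0 ≤ 1 := by nlinarith
  refine ⟨if 0 ≤ x 1 then Real.arccos (x 0) else -Real.arccos (x 0), ?_⟩
  apply Subtype.ext
  have hcos : ∀ t ∈ ({Real.arccos (x 0), -Real.arccos (x 0)} : Set ℝ), Real.cos t = x 0 := by
    rintro t (rfl | rfl)
    · exact Real.cos_arccos hx0 hx0'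
    · rw [Real.cos_neg]; exact Real.cos_arccos hx0 hx0'
  have hsin : Real.sin (Real.arccos (x 0)) = |x 1| := by
    rw [Real.sin_arccos]
    have : 1 - x 0 ^ 2 = x 1 ^ 2 := by linarith
    rw [this, Real.sqrt_sq_eq_abs]
  apply PiLp.ext
  intro i
  fin_cases i
  · show par _ 0 = x 0
    rw [par_zero]
    split_ifs with h
    · exact hcos _ (Or.inl rfl)
    · exact hcos _ (Or.inr rfl)
  · show par _ 1 = x 1
    rw [par_one]
    split_ifs with h
    · rw [hsin, abs_of_nonneg h]
    · rw [Real.sin_neg, hsin, abs_of_neg (lt_of_not_ge h)]; ring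

/-- A continuous obstruction function `g₀ : S¹ → ℝ²` can be avoided by an
arbitrarily small continuous perturbation: for any `η > 0` there is a
continuous `g : S¹ → ℝ²` with `‖g s‖ < η` and `g s ≠ g₀ s` for all `s`. -/
theorem exists_small_avoiding_map
    (g₀ : C((Metric.sphere (0 : EuclideanSpace ℝ (Fin 2)) 1 : Set (EuclideanSpace ℝ (Fin 2))),
        EuclideanSpace ℝ (Fin 2)))
    (η : ℝ) (hη : 0 < η) :
    ∃ g : C((Metric.sphere (0 : EuclideanSpace ℝ (Fin 2)) 1 : Set (EuclideanSpace ℝ (Fin 2))),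
        EuclideanSpace ℝ (Fin 2)),
      ∀ s, ‖g s‖ < η ∧ g s ≠ g₀ s := by
  set ε : ℝ := η / 4 with hε
  have hεpos : 0 < ε := by positivity
  -- coordinates of g₀
  have fcont : ∀ i : Fin 2, Continuous fun s : Sph => g₀ s i :=
    fun i => (continuous_apply i).comp ((PiLp.continuous_ofLp 2 _).comp g₀.continuous)
  set f : Fin 2 → C(Sph, ℝ) := fun i => ⟨fun s => g₀ s i, fcont i⟩ with hf
  -- Stone-Weierstrass approximation of each coordinate
  have happrox : ∀ i : Fin 2, ∃ p : C(Sph, ℝ), p ∈ coordAlg ∧ ‖p - f i‖ < ε := by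
    intro i
    obtain ⟨⟨p, hp⟩, hnear⟩ :=
      ContinuousMap.exists_mem_subalgebra_near_continuousMap_of_separatesPoints
        coordAlg coordAlg_sep (f i) ε hεpos
    exact ⟨p, hp, hnear⟩
  choose p hpmem hpnear using happrox
  choose K hK using fun i => mem_coordAlg_lipschitz (p i) (hpmem i)
  -- the Lipschitz approximating map h
  set h : Sph → E2 := fun s => (WithLp.equiv 2 (Fin 2 → ℝ)).symm (fun i => p i s) with hh
  have happ : ∀ s i, h s i = p i s := fun s i => rfl
  have hLip : LipschitzWith (K 0 + K 1) h := by
    apply LipschitzWith.of_dist_le_mul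
    intro a b
    rw [dist_eq_norm]
    calc ‖h a - h b‖ ≤ |(h a - h b) 0| + |(h a - h b) 1| := e2_norm_le_abs _
      _ = dist (p 0 a) (p 0 b) + dist (p 1 a) (p 1 b) := by
          simp [PiLp.sub_apply, happ, Real.dist_eq]
      _ ≤ (K 0) * dist a b + (K 1) * dist a b :=
          add_le_add ((hK 0).dist_le_mul a b) ((hK 1).dist_le_mul a b)
      _ = ((K 0 + K 1 : NNReal) : ℝ) * dist a b := by push_cast; ring
  -- h is uniformly 2ε-close to g₀
  have hclose : ∀ s, ‖h s - g₀ s‖ < 2 * ε := by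
    intro s
    have key : ∀ i : Fin 2, |p i s - g₀ s i| < ε := by
      intro i
      have := (p i - f i).norm_coe_le_norm s
      have h2 : (p i - f i) s = p i s - g₀ s i := by simp [hf]
      rw [h2] at this
      exact lt_of_le_of_lt (by simpa using this) (hpnear i)
    calc ‖h s - g₀ s‖ ≤ |(h s - g₀ s) 0| + |(h s - g₀ s) 1| := e2_norm_le_abs _
      _ = |p 0 s - g₀ s 0| + |p 1 s - g₀ s 1| := by simp [PiLp.sub_apply, happ]
      _ < ε + ε := add_lt_add (key 0) (key 1)
      _ = 2 * ε := by ring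
  -- the range of h has Hausdorff dimension at most 1
  have hdim : dimH (Set.range h) ≤ 1 := by
    have : Set.range h = Set.range (h ∘ parS) := by
      rw [Set.range_comp, parS_surj.range_eq, Set.image_univ]
    rw [this]
    calc dimH (Set.range (h ∘ parS)) ≤ dimH (Set.univ : Set ℝ) :=
          (hLip.comp parS_lipschitz).dimH_range_le
      _ = 1 := Real.dimH_univ
  -- pick a point c in the small ball not in the range of h
  have hc : ∃ c : E2, ‖c‖ < ε ∧ ∀ s, h s ≠ c := by
    by_contra hcon
    push_neg at hcon
    have hsub : Metric.ball (0 : E2) ε ⊆ Set.range h := by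
      intro c hcball
      obtain ⟨s, hs⟩ := hcon c (by simpa [mem_ball_zero_iff] using hcball)
      exact ⟨s, hs⟩
    have h2 : dimH (Metric.ball (0 : E2) ε) = 2 := by
      rw [Real.dimH_of_mem_nhds (Metric.ball_mem_nhds 0 hεpos)]
      simp [finrank_euclideanSpace_fin]
    have := (dimH_mono hsub).trans hdim
    rw [h2] at this
    norm_num at this
  obtain ⟨c, hcnorm, hcavoid⟩ := hc
  -- assemble the perturbation
  refine ⟨⟨fun s => g₀ s - h s + c, by
    exact ((g₀.continuous.sub hLip.continuous).add continuous_const)⟩, ?_⟩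
  intro s
  constructor
  · calc ‖g₀ s - h s + c‖ ≤ ‖g₀ s - h s‖ + ‖c‖ := norm_add_le _ _
      _ < 2 * ε + ε := add_lt_add (by rw [norm_sub_rev]; exact hclose s) hcnorm
      _ = 3 * (η / 4) := by rw [hε]; ring
      _ < η := by linarith
  · intro heq
    simp only [ContinuousMap.coe_mk] at heq
    apply hcavoid s
    have h1 : g₀ s - h s + c - g₀ s = 0 := by rw [heq]; abel
    have h2 : g₀ s - h s + c - g₀ s = c - h s := by abel
    rw [h2] at h1
    exact (eq_of_sub_eq_zero h1).symm

end
end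

section
/- Let D and D_n (n ∈ ℕ) be compact convex subsets of ℝ² with nonempty interiors, and suppose the Hausdorff distance between D_n and D tends to 0 as n → ∞. Then the Hausdorff distance between the frontier of D_n and the frontier of D tends to 0 as n → ∞. -/
open Filter Metric Set
open EMetric (hausdorffEdist hausdorffEdist_comm)
open scoped RealInnerProductSpace

section Aux

variable {E : Type*} [NormedAddCommGroup E] [InnerProductSpace ℝ E]

/-- If `ball x δ ⊆ B`, and every point of `B` is within `ε < δ` of the convex compact set `A`,
then `x ∈ interior A`. -/
lemma mem_interior_of_ball_subset
    {A B : Set E} (hA : IsCompact A) (hAne : A.Nonempty) (hAconv : Convex ℝ A)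
    {x : E} {ε δ : ℝ} (hε : 0 ≤ ε) (hεδ : ε < δ) (hball : ball x δ ⊆ B)
    (hnear : ∀ p ∈ B, infDist p A ≤ ε) : x ∈ interior A := by
  have hr : 0 < (δ - ε) / 4 := by linarith
  have hsub : ball x ((δ - ε) / 4) ⊆ A := by
    intro x' hx'
    by_contra hxA
    obtain ⟨p, hpA, hpd⟩ := hA.exists_infDist_eq_dist hAne x'
    have hμpos : 0 < dist x' p := by
      rw [dist_pos]
      rintro rfl; exact hxA hpA
    have hnorm : ‖x' - p‖ = dist x' p := (dist_eq_norm _ _).symm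
    have hproj : ∀ w ∈ A, ⟪x' - p, w - p⟫ ≤ 0 := by
      rw [← norm_eq_iInf_iff_real_inner_le_zero hAconv hpA]
      rw [hnorm, ← hpd, infDist_eq_iInf]
      exact congrArg _ (funext fun y => dist_eq_norm _ _)
    set μ := dist x' p with hμ
    set u : E := ‖x' - p‖⁻¹ • (x' - p) with hu
    have hun : ‖u‖ = 1 := by
      rw [hu, norm_smul, norm_inv, norm_norm, hnorm]
      field_simp
    set q : E := x' + (ε + (δ - ε) / 2) • u with hq
    have hqB : q ∈ B := by
      apply hball
      rw [mem_ball]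
      calc dist q x ≤ dist q x' + dist x' x := dist_triangle _ _ _
        _ < (ε + (δ - ε) / 2) + (δ - ε) / 4 := by
            apply add_lt_add_of_le_of_lt
            · rw [hq, dist_eq_norm, add_sub_cancel_left, norm_smul, hun, mul_one,
                Real.norm_of_nonneg (by linarith : (0:ℝ) ≤ ε + (δ - ε) / 2)]
            · exact mem_ball.mp hx'
        _ ≤ δ := by linarith
    have key : ∀ y ∈ A, μ + (ε + (δ - ε) / 2) ≤ dist q y := by
      intro y hy
      have h1 : ⟪u, q - y⟫ ≤ dist q y := by
        calc ⟪u, q - y⟫ ≤ ‖u‖ * ‖q - y‖ := real_inner_le_norm _ _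
          _ = dist q y := by rw [hun, one_mul, dist_eq_norm]
      have hdecomp : q - y = (x' - p) + (ε + (δ - ε) / 2) • u + (p - y) := by
        rw [hq]; abel
      have h2 : ⟪u, q - y⟫ = ⟪u, x' - p⟫ + (ε + (δ - ε) / 2) * ⟪u, u⟫ + ⟪u, p - y⟫ := by
        rw [hdecomp, inner_add_right, inner_add_right, real_inner_smul_right]
      have e1 : ⟪u, x' - p⟫ = μ := by
        rw [hu, real_inner_smul_left, real_inner_self_eq_norm_sq, hnorm]
        field_simp
      have e2 : ⟪u, u⟫ = (1 : ℝ) := by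
        have := real_inner_self_eq_norm_sq u
        rw [hun] at this
        simpa using this
      have e3 : (0 : ℝ) ≤ ⟪u, p - y⟫ := by
        rw [hu, real_inner_smul_left]
        have hpy : (0 : ℝ) ≤ ⟪x' - p, p - y⟫ := by
          have h := hproj y hy
          have hne : p - y = -(y - p) := by abel
          rw [hne, inner_neg_right]
          linarith
        positivity
      rw [h2, e2, mul_one] at h1
      linarith
    obtain ⟨y₀, hy₀A, hy₀d⟩ := hA.exists_infDist_eq_dist hAne q
    have h3 := hnear q hqB
    rw [hy₀d] at h3
    have h4 := key y₀ hy₀A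
    linarith
  exact mem_interior.mpr ⟨ball x ((δ - ε) / 4), hsub, isOpen_ball, mem_ball_self hr⟩

/-- For a point outside a compact set, the distance to the frontier is at most the distance
to the set (the nearest point lies on the frontier). -/
lemma infDist_frontier_le_infDist
    {B : Set E} (hB : IsCompact B) (hBne : B.Nonempty) {x : E} (hx : x ∉ B) :
    infDist x (frontier B) ≤ infDist x B := by
  obtain ⟨p, hpB, hpd⟩ := hB.exists_infDist_eq_dist hBne x
  have hxp : 0 < ‖x - p‖ := by
    rw [norm_sub_pos_iff]
    rintro rfl; exact hx hpB
  have hpf : p ∈ frontier B := by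
    refine ⟨subset_closure hpB, fun hpint => ?_⟩
    rw [mem_interior_iff_mem_nhds, Metric.mem_nhds_iff] at hpint
    obtain ⟨r, hr, hrB⟩ := hpint
    set t : ℝ := min (1/2) (r / (2 * ‖x - p‖)) with ht
    have ht0 : 0 < t := lt_min (by norm_num) (by positivity)
    have ht1 : t ≤ 1/2 := min_le_left _ _
    have hz : p + t • (x - p) ∈ B := by
      apply hrB
      rw [mem_ball, dist_eq_norm, add_sub_cancel_left, norm_smul,
        Real.norm_of_nonneg ht0.le]
      calc t * ‖x - p‖ ≤ r / (2 * ‖x - p‖) * ‖x - p‖ := by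
            apply mul_le_mul_of_nonneg_right (min_le_right _ _) (norm_nonneg _)
        _ = r / 2 := by field_simp
        _ < r := by linarith
    have hlt : dist x (p + t • (x - p)) < dist x p := by
      have : x - (p + t • (x - p)) = (1 - t) • (x - p) := by
        rw [sub_smul, one_smul]; abel
      rw [dist_eq_norm, this, norm_smul, Real.norm_of_nonneg (by linarith), dist_eq_norm]
      nlinarith
    have := infDist_le_dist_of_mem (x := x) hz
    rw [hpd] at this
    linarith
  calc infDist x (frontier B) ≤ dist x p := infDist_le_dist_of_mem hpf
    _ = infDist x B := hpd.symm

/-- Key one-sided estimate: any frontier point of `A` is within `hausdorffDist A B` of the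
frontier of `B`. -/
lemma infDist_frontier_le_hausdorffDist [Nontrivial E]
    {A B : Set E} (hA : IsCompact A) (hAne : A.Nonempty) (hAconv : Convex ℝ A)
    (hB : IsCompact B) (hBne : B.Nonempty)
    {x : E} (hx : x ∈ frontier A) :
    infDist x (frontier B) ≤ hausdorffDist A B := by
  have hfin : hausdorffEdist A B ≠ ⊤ :=
    hausdorffEdist_ne_top_of_nonempty_of_bounded hAne hBne hA.isBounded hB.isBounded
  by_cases hxB : x ∈ B
  · by_contra hlt
    push_neg at hlt
    obtain ⟨y, hyf, hyd⟩ := hB.exists_mem_frontier_infDist_compl_eq_dist hxB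
    have hle : infDist x (frontier B) ≤ infDist x Bᶜ := by
      rw [hyd]; exact infDist_le_dist_of_mem hyf
    have hball : ball x (infDist x (frontier B)) ⊆ B :=
      (ball_subset_ball hle).trans ball_infDist_compl_subset
    have hnear : ∀ p ∈ B, infDist p A ≤ hausdorffDist A B := by
      intro p hp
      rw [hausdorffDist_comm]
      exact infDist_le_hausdorffDist_of_mem hp (by rwa [hausdorffEdist_comm])
    have := mem_interior_of_ball_subset hA hAne hAconv hausdorffDist_nonneg hlt hball hnear
    exact hx.2 this
  · have hxA : x ∈ A := hA.isClosed.frontier_subset hx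
    calc infDist x (frontier B) ≤ infDist x B := infDist_frontier_le_infDist hB hBne hxB
      _ ≤ hausdorffDist A B := infDist_le_hausdorffDist_of_mem hxA hfin

lemma hausdorffDist_frontier_le [Nontrivial E]
    {A B : Set E} (hA : IsCompact A) (hAne : A.Nonempty) (hAconv : Convex ℝ A)
    (hB : IsCompact B) (hBne : B.Nonempty) (hBconv : Convex ℝ B) :
    hausdorffDist (frontier A) (frontier B) ≤ hausdorffDist A B := by
  refine hausdorffDist_le_of_infDist hausdorffDist_nonneg
    (fun x hx => infDist_frontier_le_hausdorffDist hA hAne hAconv hB hBne hx)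
    (fun x hx => ?_)
  rw [hausdorffDist_comm (s := A)]
  exact infDist_frontier_le_hausdorffDist hB hBne hBconv hA hAne hx

end Aux

/-- If compact convex planar sets with nonempty interior converge in Hausdorff
distance, then their frontiers converge in Hausdorff distance. -/
theorem frontier_hausdorff_continuous
    (D : Set (EuclideanSpace ℝ (Fin 2))) (Dn : ℕ → Set (EuclideanSpace ℝ (Fin 2)))
    (hD : IsCompact D) (hDconv : Convex ℝ D) (hDint : (interior D).Nonempty)
    (hDn : ∀ n, IsCompact (Dn n)) (hDnconv : ∀ n, Convex ℝ (Dn n))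
    (hDnint : ∀ n, (interior (Dn n)).Nonempty)
    (hconv : Tendsto (fun n => Metric.hausdorffDist (Dn n) D) atTop (nhds 0)) :
    Tendsto (fun n => Metric.hausdorffDist (frontier (Dn n)) (frontier D)) atTop (nhds 0) := by
  have hDne : D.Nonempty := hDint.mono interior_subset
  have hDnne : ∀ n, (Dn n).Nonempty := fun n => (hDnint n).mono interior_subset
  exact squeeze_zero (fun n => hausdorffDist_nonneg)
    (fun n => hausdorffDist_frontier_le (hDn n) (hDnne n) (hDnconv n) hD hDne hDconv) hconv
end

section
/- Let D and D_n (n ∈ ℕ) be compact convex subsets of ℝ² with nonempty interiors, and suppose the Hausdorff distance between D_n and D tends to 0 as n → ∞. Let b(C) denote the unique minimizer over C of the functional E_C(x) = ∫_C ‖x − y‖² dy for a compact convex set C with nonempty interior. Then b(D_n) → b(D) as n → ∞. -/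
open Filter MeasureTheory Metric Set
open scoped RealInnerProductSpace

section Geom

variable {F : Type*} [NormedAddCommGroup F] [InnerProductSpace ℝ F]

/-- If a convex compact set `C` is at Hausdorff distance `< r/2` from a set `D`
containing the ball of radius `r` around `x`, then `x ∈ C`. -/
lemma mem_of_hausdorff_lt {C D : Set F} (hC : IsCompact C) (hCc : Convex ℝ C)
    (hCne : C.Nonempty) (hDb : Bornology.IsBounded D) {x : F} {r : ℝ} (hr : 0 < r)
    (hball : Metric.ball x r ⊆ D) (hH : Metric.hausdorffDist C D < r / 2) : x ∈ C := by
  by_contra hx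
  obtain ⟨p, hp, hnorm⟩ := exists_norm_eq_iInf_of_complete_convex hCne hC.isComplete hCc x
  have hproj : ∀ w ∈ C, ⟪x - p, w - p⟫ ≤ 0 :=
    (norm_eq_iInf_iff_real_inner_le_zero hCc hp).1 hnorm
  set v := x - p with hv
  have hvne : v ≠ 0 := sub_ne_zero.2 fun h => hx (h ▸ hp)
  have hvpos : 0 < ‖v‖ := norm_pos_iff.2 hvne
  set z := x + (3 * r / 4 / ‖v‖) • v with hz
  have hzx : ‖z - x‖ = 3 * r / 4 := by
    have : z - x = (3 * r / 4 / ‖v‖) • v := by rw [hz]; abel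
    rw [this, norm_smul, Real.norm_eq_abs, abs_of_pos (by positivity)]
    field_simp
  have hzD : z ∈ D := hball (by
    simp only [Metric.mem_ball, dist_eq_norm]
    rw [hzx]; linarith)
  have hedist : EMetric.hausdorffEdist D C ≠ ⊤ :=
    Metric.hausdorffEdist_ne_top_of_nonempty_of_bounded ⟨x, hball (by simpa using hr)⟩
      hCne hDb hC.isBounded
  have hinf : Metric.infDist z C < 3 * r / 4 := by
    have h1 : Metric.infDist z C ≤ Metric.hausdorffDist D C :=
      Metric.infDist_le_hausdorffDist_of_mem hzD hedist
    rw [Metric.hausdorffDist_comm] at h1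
    linarith
  obtain ⟨p', hp', hdzp⟩ := (Metric.infDist_lt_iff hCne).1 hinf
  have h1 : ⟪v, z - p'⟫ ≤ ‖v‖ * ‖z - p'‖ := real_inner_le_norm _ _
  have h2 : ‖z - p'‖ < 3 * r / 4 := by rwa [← dist_eq_norm]
  have hsplit : z - p' = v + (p - p') + (3 * r / 4 / ‖v‖) • v := by
    rw [hz, hv]; abel
  have h3 : ⟪v, z - p'⟫ =
      ‖v‖ ^ 2 + ⟪v, p - p'⟫ + (3 * r / 4 / ‖v‖) * ‖v‖ ^ 2 := by
    rw [hsplit, inner_add_right, inner_add_right, real_inner_smul_right,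
      real_inner_self_eq_norm_sq]
  have h4 : ⟪v, p - p'⟫ ≥ 0 := by
    have := hproj p' hp'
    have hne : ⟪v, p' - p⟫ = -⟪v, p - p'⟫ := by
      rw [← inner_neg_right]; congr 1; abel
    rw [hv] at this ⊢
    linarith [hne ▸ this]
  have h5 : (3 * r / 4 / ‖v‖) * ‖v‖ ^ 2 = (3 * r / 4) * ‖v‖ := by
    field_simp
  nlinarith [sq_nonneg ‖v‖, mul_le_mul_of_nonneg_left h2.le (norm_nonneg v)]

end Geom

section Centroid

local notation "E2" => EuclideanSpace ℝ (Fin 2)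

/-- The minimizer of `x ↦ ∫_C ‖x - y‖²` over a compact convex set `C` with nonempty
interior is the centroid of `C`. -/
lemma minimizer_eq_centroid {C : Set E2} (hC : IsCompact C) (hCc : Convex ℝ C)
    (hCint : (interior C).Nonempty) {b : E2} (hbC : b ∈ C)
    (hmin : ∀ x ∈ C, (∫ y in C, ‖b - y‖ ^ 2) ≤ ∫ y in C, ‖x - y‖ ^ 2) :
    b = (volume C).toReal⁻¹ • ∫ y in C, y := by
  have hmeas : MeasurableSet C := hC.isClosed.measurableSet
  have hfin : volume C ≠ ⊤ := hC.measure_lt_top.ne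
  have hpos : 0 < volume C := by
    calc 0 < volume (interior C) := isOpen_interior.measure_pos volume hCint
    _ ≤ volume C := measure_mono interior_subset
  set V := (volume C).toReal with hVdef
  have hV : 0 < V := ENNReal.toReal_pos hpos.ne' hfin
  have hIntId : IntegrableOn (fun y : E2 => y) C volume :=
    ContinuousOn.integrableOn_compact hC continuousOn_id
  have hIntSq : IntegrableOn (fun y : E2 => ‖y‖ ^ 2) C volume :=
    ContinuousOn.integrableOn_compact hC ((continuous_norm.pow 2).continuousOn)
  have hIntInner : ∀ w : E2, IntegrableOn (fun y : E2 => ⟪w, y⟫) C volume := fun w =>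
    (innerSL ℝ w).integrable_comp hIntId
  set c := V⁻¹ • ∫ y in C, y with hcdef
  have hc_mem : c ∈ C := by
    have hfs : ∀ᵐ y ∂(volume.restrict C), y ∈ C :=
      ae_restrict_mem hmeas
    have := hCc.set_average_mem hC.isClosed hpos.ne' hfin hfs hIntId
    rwa [setAverage_eq] at this
  have hsum : (∫ y in C, y) = V • c := by
    rw [hcdef, smul_smul, mul_inv_cancel₀ hV.ne', one_smul]
  have hinner : ∀ w : E2, (∫ y in C, ⟪w, y⟫) = V * ⟪w, c⟫ := by
    intro w
    have h := (innerSL ℝ w).integral_comp_comm hIntId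
    simp only [innerSL_apply_apply] at h
    rw [h, hsum, real_inner_smul_right]
  have decomp : ∀ x : E2, (∫ y in C, ‖x - y‖ ^ 2) =
      V * ‖x‖ ^ 2 - 2 * (V * ⟪x, c⟫) + ∫ y in C, ‖y‖ ^ 2 := by
    intro x
    have e1 : (∫ y in C, ‖x - y‖ ^ 2) =
        ∫ y in C, (‖x‖ ^ 2 - 2 * ⟪x, y⟫ + ‖y‖ ^ 2) := by
      apply setIntegral_congr_fun hmeas
      intro y _
      exact norm_sub_sq_real x y
    have hIconst : IntegrableOn (fun _ : E2 => ‖x‖ ^ 2) C volume :=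
      integrableOn_const hC.measure_lt_top.ne
    have hI2 : IntegrableOn (fun y : E2 => 2 * ⟪x, y⟫) C volume :=
      (hIntInner x).const_mul 2
    have hI1 : IntegrableOn (fun y : E2 => ‖x‖ ^ 2 - 2 * ⟪x, y⟫) C volume :=
      hIconst.sub hI2
    rw [e1, integral_add hI1 hIntSq, integral_sub hIconst hI2,
      integral_const_mul, hinner, setIntegral_const, smul_eq_mul, mul_comm]
    change ‖x‖ ^ 2 * V - _ + _ = _
    ring
  have key : ∀ x : E2, (∫ y in C, ‖x - y‖ ^ 2) =
      V * ‖x - c‖ ^ 2 + ∫ y in C, ‖c - y‖ ^ 2 := by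
    intro x
    rw [decomp x, decomp c]
    have h1 : ‖x - c‖ ^ 2 = ‖x‖ ^ 2 - 2 * ⟪x, c⟫ + ‖c‖ ^ 2 := norm_sub_sq_real x c
    have h2 : ⟪c, c⟫ = ‖c‖ ^ 2 := real_inner_self_eq_norm_sq c
    rw [h1, h2]; ring
  have hle := hmin c hc_mem
  rw [key b] at hle
  have hb0 : V * ‖b - c‖ ^ 2 ≤ 0 := by linarith
  have hsq : ‖b - c‖ ^ 2 = 0 := by nlinarith [sq_nonneg ‖b - c‖]
  have hbc : b - c = 0 := by
    rwa [pow_eq_zero_iff (two_ne_zero), norm_eq_zero] at hsq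
  rwa [sub_eq_zero] at hbc

end Centroid

/-- Continuity of the Karcher mean: if compact convex planar sets with
nonempty interior converge in Hausdorff distance, then the minimizers over
them of `E_C(x) = ∫_C ‖x - y‖² dy` converge to the minimizer for the limit
set. -/
theorem karcher_mean_continuous
    (D : Set (EuclideanSpace ℝ (Fin 2))) (Dn : ℕ → Set (EuclideanSpace ℝ (Fin 2)))
    (hD : IsCompact D) (hDconv : Convex ℝ D) (hDint : (interior D).Nonempty)
    (hDn : ∀ n, IsCompact (Dn n)) (hDnconv : ∀ n, Convex ℝ (Dn n))
    (hDnint : ∀ n, (interior (Dn n)).Nonempty)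
    (hconv : Tendsto (fun n => Metric.hausdorffDist (Dn n) D) atTop (nhds 0))
    (b : ℕ → EuclideanSpace ℝ (Fin 2)) (bD : EuclideanSpace ℝ (Fin 2))
    (hb : ∀ n, b n ∈ Dn n ∧
      ∀ x ∈ Dn n, (∫ y in Dn n, ‖b n - y‖ ^ 2) ≤ ∫ y in Dn n, ‖x - y‖ ^ 2)
    (hbD : bD ∈ D ∧ ∀ x ∈ D, (∫ y in D, ‖bD - y‖ ^ 2) ≤ ∫ y in D, ‖x - y‖ ^ 2) :
    Tendsto b atTop (nhds bD) := by
  classical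
  have hDne : D.Nonempty := hDint.mono interior_subset
  have hDnne : ∀ n, (Dn n).Nonempty := fun n => (hDnint n).mono interior_subset
  -- identify the minimizers with the centroids
  have hbn : ∀ n, b n = (volume (Dn n)).toReal⁻¹ • ∫ y in Dn n, y := fun n =>
    minimizer_eq_centroid (hDn n) (hDnconv n) (hDnint n) (hb n).1 (hb n).2
  have hbDc : bD = (volume D).toReal⁻¹ • ∫ y in D, y :=
    minimizer_eq_centroid hD hDconv hDint hbD.1 hbD.2
  -- a uniform bound for the sets `Dn n`
  obtain ⟨R, hR⟩ := (hD.isBounded.thickening (δ := 1)).subset_closedBall 0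
  have hDR : D ⊆ Metric.closedBall 0 R :=
    (Metric.self_subset_thickening one_pos D).trans hR
  have hR0 : 0 ≤ R := by
    obtain ⟨d, hd⟩ := hDne
    have := hDR hd
    rw [Metric.mem_closedBall] at this
    exact le_trans dist_nonneg this
  have hevsub : ∀ᶠ n in atTop, Dn n ⊆ Metric.closedBall 0 R := by
    have h1 : ∀ᶠ n in atTop, Metric.hausdorffDist (Dn n) D < 1 :=
      hconv.eventually_lt_const one_pos
    filter_upwards [h1] with n hn x hx
    apply hR
    rw [Metric.mem_thickening_iff]
    have hfin : EMetric.hausdorffEdist (Dn n) D ≠ ⊤ :=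
      Metric.hausdorffEdist_ne_top_of_nonempty_of_bounded (hDnne n) hDne
        (hDn n).isBounded hD.isBounded
    have hle := Metric.infDist_le_hausdorffDist_of_mem hx hfin
    have hlt : Metric.infDist x D < 1 := lt_of_le_of_lt hle hn
    exact (Metric.infDist_lt_iff hDne).1 hlt
  -- almost everywhere, membership in `Dn n` eventually agrees with membership in `D`
  have core : ∀ᵐ a : (EuclideanSpace ℝ (Fin 2)), ∀ᶠ n in atTop, (a ∈ Dn n ↔ a ∈ D) := by
    have hfr : volume (frontier D) = 0 := hDconv.addHaar_frontier volume
    have hae : ∀ᵐ a : (EuclideanSpace ℝ (Fin 2)), a ∉ frontier D :=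
      (MeasureTheory.ae_iff).2 (by simpa using hfr)
    filter_upwards [hae] with a ha
    by_cases haD : a ∈ D
    · have haint : a ∈ interior D := by
        by_contra h
        exact ha ⟨subset_closure haD, h⟩
      obtain ⟨r, hr, hball⟩ := Metric.isOpen_iff.1 isOpen_interior a haint
      have hball' : Metric.ball a r ⊆ D := hball.trans interior_subset
      have h2 : ∀ᶠ n in atTop, Metric.hausdorffDist (Dn n) D < r / 2 :=
        hconv.eventually_lt_const (by linarith)
      filter_upwards [h2] with n hn
      simp only [haD, iff_true]
      exact mem_of_hausdorff_lt (hDn n) (hDnconv n) (hDnne n) hD.isBounded hr hball' hn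
    · have hpos : 0 < Metric.infDist a D :=
        (hD.isClosed.notMem_iff_infDist_pos hDne).1 haD
      have h2 : ∀ᶠ n in atTop, Metric.hausdorffDist (Dn n) D < Metric.infDist a D :=
        hconv.eventually_lt_const hpos
      filter_upwards [h2] with n hn
      simp only [haD, iff_false]
      intro haDn
      have hfin : EMetric.hausdorffEdist (Dn n) D ≠ ⊤ :=
        Metric.hausdorffEdist_ne_top_of_nonempty_of_bounded (hDnne n) hDne
          (hDn n).isBounded hD.isBounded
      have hle := Metric.infDist_le_hausdorffDist_of_mem haDn hfin
      linarith
  have hballint : volume (Metric.closedBall (0 : (EuclideanSpace ℝ (Fin 2))) R) < ⊤ :=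
    measure_closedBall_lt_top
  -- convergence of the volumes
  have hVt : Tendsto (fun n => (volume (Dn n)).toReal) atTop
      (nhds (volume D).toReal) := by
    have key := tendsto_integral_filter_of_dominated_convergence (μ := volume) (l := atTop)
      (F := fun n => (Dn n).indicator fun _ => (1 : ℝ))
      (f := D.indicator fun _ => (1 : ℝ))
      ((Metric.closedBall (0 : (EuclideanSpace ℝ (Fin 2))) R).indicator fun _ => (1 : ℝ))
      (Eventually.of_forall fun n =>
        (aestronglyMeasurable_const.indicator (hDn n).measurableSet))
      ?_ ?_ ?_
    · have e : ∀ s : Set (EuclideanSpace ℝ (Fin 2)), MeasurableSet s →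
          (∫ a, s.indicator (fun _ => (1 : ℝ)) a) = (volume s).toReal := by
        intro s hs
        rw [integral_indicator_const (1 : ℝ) hs, smul_eq_mul, mul_one]
        rfl
      have e2 : (fun n => ∫ a, (Dn n).indicator (fun _ => (1 : ℝ)) a) =
          fun n => (volume (Dn n)).toReal := by
        funext n; exact e _ (hDn n).measurableSet
      rw [e2, e D hD.measurableSet] at key
      exact key
    · filter_upwards [hevsub] with n hn
      apply ae_of_all
      intro a
      by_cases ha : a ∈ Dn n
      · rw [Set.indicator_of_mem ha, Set.indicator_of_mem (hn ha)]
        simp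
      · rw [Set.indicator_of_notMem ha]
        simp only [norm_zero]
        exact Set.indicator_nonneg (fun _ _ => zero_le_one) a
    · exact (integrableOn_const hballint.ne).integrable_indicator
        measurableSet_closedBall
    · filter_upwards [core] with a ha
      have heq : ∀ᶠ n in atTop,
          D.indicator (fun _ => (1 : ℝ)) a = (Dn n).indicator (fun _ => (1 : ℝ)) a := by
        filter_upwards [ha] with n hn
        by_cases hD' : a ∈ D
        · rw [Set.indicator_of_mem (hn.2 hD'), Set.indicator_of_mem hD']
        · rw [Set.indicator_of_notMem (fun h => hD' (hn.1 h)),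
            Set.indicator_of_notMem hD']
      exact tendsto_const_nhds.congr' heq
  -- convergence of the vector integrals
  have hIt : Tendsto (fun n => ∫ y in Dn n, y) atTop (nhds (∫ y in D, y)) := by
    have key := tendsto_integral_filter_of_dominated_convergence (μ := volume) (l := atTop)
      (F := fun n => (Dn n).indicator fun y : (EuclideanSpace ℝ (Fin 2)) => y)
      (f := D.indicator fun y : (EuclideanSpace ℝ (Fin 2)) => y)
      ((Metric.closedBall (0 : (EuclideanSpace ℝ (Fin 2))) R).indicator fun _ => R)
      (Eventually.of_forall fun n =>
        (aestronglyMeasurable_id.indicator (hDn n).measurableSet))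
      ?_ ?_ ?_
    · have e2 : (fun n => ∫ a, (Dn n).indicator (fun y : (EuclideanSpace ℝ (Fin 2)) => y) a) =
          fun n => ∫ y in Dn n, y := by
        funext n; exact integral_indicator (hDn n).measurableSet
      rw [e2, integral_indicator hD.measurableSet] at key
      exact key
    · filter_upwards [hevsub] with n hn
      apply ae_of_all
      intro a
      by_cases ha : a ∈ Dn n
      · rw [Set.indicator_of_mem ha, Set.indicator_of_mem (hn ha)]
        have := hn ha
        rw [Metric.mem_closedBall, dist_zero_right] at this
        exact this
      · rw [Set.indicator_of_notMem ha]
        simp only [norm_zero]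
        exact Set.indicator_nonneg (fun _ _ => hR0) a
    · exact (integrableOn_const hballint.ne).integrable_indicator
        measurableSet_closedBall
    · filter_upwards [core] with a ha
      have heq : ∀ᶠ n in atTop,
          D.indicator (fun y : (EuclideanSpace ℝ (Fin 2)) => y) a = (Dn n).indicator (fun y : (EuclideanSpace ℝ (Fin 2)) => y) a := by
        filter_upwards [ha] with n hn
        by_cases hD' : a ∈ D
        · rw [Set.indicator_of_mem (hn.2 hD'), Set.indicator_of_mem hD']
        · rw [Set.indicator_of_notMem (fun h => hD' (hn.1 h)),
            Set.indicator_of_notMem hD']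
      exact tendsto_const_nhds.congr' heq
  -- conclude
  have hposD : 0 < volume D := by
    calc 0 < volume (interior D) := isOpen_interior.measure_pos volume hDint
    _ ≤ volume D := measure_mono interior_subset
  have hVD : (volume D).toReal ≠ 0 :=
    (ENNReal.toReal_pos hposD.ne' hD.measure_lt_top.ne).ne'
  have hfinal := (hVt.inv₀ hVD).smul hIt
  rw [hbDc]
  exact hfinal.congr fun n => (hbn n).symm
end

section
/- Let D and D_n (n ∈ ℕ) be compact convex subsets of ℝ². Suppose the Hausdorff distance between D_n and D tends to 0, x_n ∈ interior(D_n) with x_n → x ∈ interior(D), and y_n ∈ D_n with y_n → y ∈ D where y ≠ x. For a compact convex set C, a point p ∈ interior(C), and q ∈ C with q ≠ p, let z(C, p, q) denote the unique point of the frontier of C such that q lies on the segment from p to z(C, p, q). Then z(D_n, x_n, y_n) → z(D, x, y) as n → ∞. -/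
open Filter

/-- If `w` is an interior point of a compact set `D` in a real Hilbert space, then
there is `r > 0` such that every convex closed bounded nonempty set `C` at Hausdorff
distance `< r` from `D` has its frontier at distance `≥ r` from `w`. -/
lemma far_from_frontier_aux {E : Type*} [NormedAddCommGroup E] [InnerProductSpace ℝ E]
    [CompleteSpace E] {D : Set E} (hD : IsCompact D) {w : E} (hw : w ∈ interior D) :
    ∃ r > 0, ∀ C : Set E, Convex ℝ C → IsClosed C → Bornology.IsBounded C → C.Nonempty →
      Metric.hausdorffDist C D < r → ∀ p ∈ frontier C, r ≤ dist p w := by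
  obtain ⟨R, hR, hball⟩ := Metric.mem_nhds_iff.1 (mem_interior_iff_mem_nhds.1 hw)
  refine ⟨R / 10, by positivity, ?_⟩
  intro C hCconv hCcl hCb hCne hH p hp
  by_contra hcon
  push_neg at hcon
  have hpC : p ∈ C := hCcl.frontier_subset hp
  have hpni : p ∉ interior C := by
    rw [← closure_diff_interior] at hp
    exact hp.2
  -- find a point `q` close to `p` outside `C`
  have hnsub : ¬ Metric.ball p (R / 10) ⊆ C := by
    intro hsub
    exact hpni (mem_interior.2 ⟨Metric.ball p (R / 10), hsub, Metric.isOpen_ball,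
      Metric.mem_ball_self (by positivity)⟩)
  obtain ⟨q, hqball, hqC⟩ := Set.not_subset.1 hnsub
  have hqw : dist q w < R / 5 := by
    have h1 : dist q p < R / 10 := Metric.mem_ball.1 hqball
    calc dist q w ≤ dist q p + dist p w := dist_triangle _ _ _
      _ < R / 10 + R / 10 := by exact add_lt_add h1 hcon
      _ = R / 5 := by ring
  -- separate `q` from `C`
  obtain ⟨f, u, hfa, hfq⟩ := geometric_hahn_banach_closed_point hCconv hCcl hqC
  set v : E := (InnerProductSpace.toDual ℝ E).symm f with hv
  have hfv : ∀ a : E, f a = inner ℝ v a := by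
    intro a
    have : f = InnerProductSpace.toDual ℝ E v := by
      rw [hv, LinearIsometryEquiv.apply_symm_apply]
    rw [this, InnerProductSpace.toDual_apply_apply]
  have hvne : v ≠ 0 := by
    intro hv0
    obtain ⟨a₀, ha₀⟩ := hCne
    have h1 := hfa a₀ ha₀
    rw [hfv a₀, hv0, inner_zero_left] at h1
    have h2 := hfq
    rw [hfv q, hv0, inner_zero_left] at h2
    linarith
  have hvpos : (0:ℝ) < ‖v‖ := norm_pos_iff.2 hvne
  set u0 : E := ‖v‖⁻¹ • v with hu0
  have hu0norm : ‖u0‖ = 1 := by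
    rw [hu0, norm_smul, norm_inv, norm_norm, inv_mul_cancel₀ hvpos.ne']
  set q' : E := w + (R / 2) • u0 with hq'
  have hq'D : q' ∈ D := by
    apply hball
    rw [Metric.mem_ball, hq']
    have : dist (w + (R / 2) • u0) w = R / 2 := by
      rw [dist_eq_norm, add_sub_cancel_left, norm_smul, hu0norm, mul_one,
        Real.norm_eq_abs, abs_of_pos (by linarith)]
    rw [this]; linarith
  have hvu0 : (inner ℝ v u0 : ℝ) = ‖v‖ := by
    rw [hu0, real_inner_smul_right, real_inner_self_eq_norm_mul_norm]
    field_simp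
  -- every point of `C` is far from `q'`
  have hfar : ∀ a ∈ C, 3 * (R / 10) ≤ dist q' a := by
    intro a ha
    have h1 : (inner ℝ v (q' - a) : ℝ) = inner ℝ v w + (R / 2) * ‖v‖ - inner ℝ v a := by
      rw [hq', inner_sub_right, inner_add_right, real_inner_smul_right, hvu0]
    have h2 : (inner ℝ v a : ℝ) < u := by rw [← hfv]; exact hfa a ha
    have h3 : u < inner ℝ v q := by rw [← hfv]; exact hfq
    have h4 : (inner ℝ v q : ℝ) ≤ inner ℝ v w + ‖v‖ * (R / 5) := by
      have : (inner ℝ v (q - w) : ℝ) ≤ ‖v‖ * ‖q - w‖ := real_inner_le_norm v (q - w)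
      have h5 : ‖q - w‖ ≤ R / 5 := by
        rw [← dist_eq_norm]; exact hqw.le
      have h6 : ‖v‖ * ‖q - w‖ ≤ ‖v‖ * (R / 5) := by
        exact mul_le_mul_of_nonneg_left h5 hvpos.le
      have h7 : (inner ℝ v q : ℝ) = inner ℝ v w + inner ℝ v (q - w) := by
        rw [← inner_add_right]
        congr 1
        abel
      linarith
    have h8 : (3 * (R / 10)) * ‖v‖ ≤ inner ℝ v (q' - a) := by
      rw [h1]
      nlinarith
    have h9 : (inner ℝ v (q' - a) : ℝ) ≤ ‖v‖ * ‖q' - a‖ := real_inner_le_norm _ _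
    have h10 : 3 * (R / 10) ≤ ‖q' - a‖ := by
      nlinarith
    rw [dist_eq_norm]; exact h10
  -- but `q' ∈ D` is close to `C` by the Hausdorff bound: contradiction
  have hfin : EMetric.hausdorffEdist D C ≠ ⊤ :=
    Metric.hausdorffEdist_ne_top_of_nonempty_of_bounded ⟨w, interior_subset hw⟩ hCne
      hD.isBounded hCb
  have hinfle : Metric.infDist q' C ≤ Metric.hausdorffDist D C :=
    Metric.infDist_le_hausdorffDist_of_mem hq'D hfin
  have hlt : Metric.infDist q' C < 3 * (R / 10) := by
    rw [Metric.hausdorffDist_comm] at hinfle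
    linarith
  obtain ⟨a, haC, hadist⟩ := (Metric.infDist_lt_iff hCne).1 hlt
  exact absurd (hfar a haC) (not_le.2 hadist)

/-- Uniqueness of the radial projection: two non-interior points of a closed convex set
on the same ray from an interior point coincide (one-sided version). -/
lemma ray_unique_aux {E : Type*} [NormedAddCommGroup E] [NormedSpace ℝ E]
    {D : Set E} (hconv : Convex ℝ D) {x p q : E} (hx : x ∈ interior D)
    (hpni : p ∉ interior D) (hq : q ∈ closure D) {s t : ℝ} (hs : 0 < s) (ht : 0 < t)
    (hts : t ≤ s) (heq : s • (p - x) = t • (q - x)) : p = q := by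
  rcases eq_or_lt_of_le hts with rfl | hlt
  · have := smul_right_injective E hs.ne' heq
    exact sub_left_injective this
  · have hpx : p - x = (t / s) • (q - x) := by
      have h1 : p - x = s⁻¹ • (s • (p - x)) := by
        rw [smul_smul, inv_mul_cancel₀ hs.ne', one_smul]
      rw [h1, heq, smul_smul]
      congr 1
      field_simp
    have hmem : p ∈ openSegment ℝ x q := by
      rw [openSegment_eq_image']
      refine ⟨t / s, ⟨div_pos ht hs, (div_lt_one hs).2 hlt⟩, ?_⟩
      simp only
      rw [← hpx]
      abel
    exact absurd (hconv.openSegment_interior_closure_subset_interior hx hq hmem) hpni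

lemma ray_unique {E : Type*} [NormedAddCommGroup E] [NormedSpace ℝ E]
    {D : Set E} (hconv : Convex ℝ D) {x p q : E} (hx : x ∈ interior D)
    (hp : p ∈ closure D) (hpni : p ∉ interior D)
    (hq : q ∈ closure D) (hqni : q ∉ interior D) {s t : ℝ} (hs : 0 < s) (ht : 0 < t)
    (heq : s • (p - x) = t • (q - x)) : p = q := by
  rcases le_total t s with h | h
  · exact ray_unique_aux hconv hx hpni hq hs ht h heq
  · exact (ray_unique_aux hconv hx hqni hp ht hs h heq.symm).symm

/-- Continuity of the radial projection to the boundary: if compact convex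
planar sets `Dₙ` converge to `D` in Hausdorff distance, `xₙ ∈ interior Dₙ`
converge to `x ∈ interior D`, and `yₙ ∈ Dₙ` converge to `y ∈ D` with `y ≠ x`,
then the radial projections `z(Dₙ, xₙ, yₙ)` (the unique frontier points `zₙ`
of `Dₙ` with `yₙ ∈ [xₙ, zₙ]`) converge to the radial projection `z(D, x, y)`. -/
theorem radial_projection_continuous
    (D : Set (EuclideanSpace ℝ (Fin 2))) (Dn : ℕ → Set (EuclideanSpace ℝ (Fin 2)))
    (hD : IsCompact D) (hDconv : Convex ℝ D)
    (hDn : ∀ n, IsCompact (Dn n)) (hDnconv : ∀ n, Convex ℝ (Dn n))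
    (hconv : Tendsto (fun n => Metric.hausdorffDist (Dn n) D) atTop (nhds 0))
    (x : EuclideanSpace ℝ (Fin 2)) (xn : ℕ → EuclideanSpace ℝ (Fin 2))
    (hxn : ∀ n, xn n ∈ interior (Dn n)) (hx : x ∈ interior D)
    (hxconv : Tendsto xn atTop (nhds x))
    (y : EuclideanSpace ℝ (Fin 2)) (yn : ℕ → EuclideanSpace ℝ (Fin 2))
    (hyn : ∀ n, yn n ∈ Dn n) (hy : y ∈ D)
    (hyconv : Tendsto yn atTop (nhds y)) (hne : y ≠ x)
    (z : ℕ → EuclideanSpace ℝ (Fin 2)) (zD : EuclideanSpace ℝ (Fin 2))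
    (hz : ∀ n, z n ∈ frontier (Dn n) ∧ yn n ∈ segment ℝ (xn n) (z n))
    (hzD : zD ∈ frontier D ∧ y ∈ segment ℝ x zD) :
    Tendsto z atTop (nhds zD) := by
  have hDne : D.Nonempty := ⟨x, interior_subset hx⟩
  have hDnne : ∀ n, (Dn n).Nonempty := fun n => ⟨xn n, interior_subset (hxn n)⟩
  have hfin : ∀ n, EMetric.hausdorffEdist (Dn n) D ≠ ⊤ := fun n =>
    Metric.hausdorffEdist_ne_top_of_nonempty_of_bounded (hDnne n) hDne
      (hDn n).isBounded hD.isBounded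
  have hzin : ∀ n, z n ∈ Dn n := fun n => (hDn n).isClosed.frontier_subset (hz n).1
  have hinf : ∀ n, Metric.infDist (z n) D ≤ Metric.hausdorffDist (Dn n) D := fun n =>
    Metric.infDist_le_hausdorffDist_of_mem (hzin n) (hfin n)
  set K : Set (EuclideanSpace ℝ (Fin 2)) := Metric.cthickening 1 D with hK
  have hKcomp : IsCompact K := hD.cthickening
  have hKev : ∀ᶠ n in atTop, z n ∈ K := by
    filter_upwards [hconv.eventually (gt_mem_nhds one_pos)] with n hn
    have h1 : Metric.infDist (z n) D < 1 := lt_of_le_of_lt (hinf n) hn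
    obtain ⟨d, hd, hdd⟩ := (Metric.infDist_lt_iff hDne).1 h1
    exact Metric.mem_cthickening_of_dist_le (z n) d 1 D hd hdd.le
  -- the coefficients of the segment condition
  have hseg : ∀ n, ∃ θ ∈ Set.Icc (0:ℝ) 1, xn n + θ • (z n - xn n) = yn n := by
    intro n
    have h := (hz n).2
    rw [segment_eq_image'] at h
    obtain ⟨θ, hθ, hθeq⟩ := h
    exact ⟨θ, hθ, hθeq⟩
  choose t ht hteq using hseg
  obtain ⟨t₁, ht₁, ht₁eq⟩ : ∃ θ ∈ Set.Icc (0:ℝ) 1, x + θ • (zD - x) = y := by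
    have h := hzD.2
    rw [segment_eq_image'] at h
    obtain ⟨θ, hθ, hθeq⟩ := h
    exact ⟨θ, hθ, hθeq⟩
  apply tendsto_of_subseq_tendsto
  intro ns hns
  have hfreq : ∃ᶠ i in atTop, z (ns i) ∈ K := (hns.eventually hKev).frequently
  obtain ⟨w, hwK, φ, hφ, hzφ⟩ := hKcomp.tendsto_subseq' hfreq
  obtain ⟨t₀, ht₀, ψ, hψ, htφ⟩ :=
    (isCompact_Icc (a := (0:ℝ)) (b := 1)).tendsto_subseq (fun i => ht (ns (φ i)))
  set m : ℕ → ℕ := fun i => ns (φ (ψ i)) with hm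
  have hmtop : Tendsto m atTop atTop :=
    hns.comp (hφ.tendsto_atTop.comp hψ.tendsto_atTop)
  have hzm : Tendsto (fun i => z (m i)) atTop (nhds w) := hzφ.comp hψ.tendsto_atTop
  have htm : Tendsto (fun i => t (m i)) atTop (nhds t₀) := htφ
  have hxm : Tendsto (fun i => xn (m i)) atTop (nhds x) := hxconv.comp hmtop
  have hym : Tendsto (fun i => yn (m i)) atTop (nhds y) := hyconv.comp hmtop
  have hHm : Tendsto (fun i => Metric.hausdorffDist (Dn (m i)) D) atTop (nhds 0) :=
    hconv.comp hmtop
  -- `w ∈ D`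
  have hwD : w ∈ D := by
    have h1 : Tendsto (fun i => Metric.infDist (z (m i)) D) atTop
        (nhds (Metric.infDist w D)) :=
      ((Metric.continuous_infDist_pt D).tendsto w).comp hzm
    have hle : Metric.infDist w D ≤ 0 :=
      le_of_tendsto_of_tendsto' h1 hHm (fun i => hinf (m i))
    exact (hD.isClosed.mem_iff_infDist_zero hDne).2
      (le_antisymm hle Metric.infDist_nonneg)
  -- `w ∉ interior D`
  have hwni : w ∉ interior D := by
    intro hwint
    obtain ⟨r, hr, hfar⟩ := far_from_frontier_aux hD hwint
    have h1 : ∀ᶠ i in atTop, dist (z (m i)) w < r := by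
      have := hzm.eventually (Metric.ball_mem_nhds w hr)
      filter_upwards [this] with i hi using Metric.mem_ball.1 hi
    have h2 : ∀ᶠ i in atTop, Metric.hausdorffDist (Dn (m i)) D < r :=
      hHm.eventually (gt_mem_nhds hr)
    obtain ⟨i, hi1, hi2⟩ := (h1.and h2).exists
    exact absurd (hfar (Dn (m i)) (hDnconv _) (hDn _).isClosed (hDn _).isBounded
      (hDnne _) hi2 _ (hz (m i)).1) (not_le.2 hi1)
  -- limit of the segment equation
  have heqlim : Tendsto (fun i => xn (m i) + t (m i) • (z (m i) - xn (m i))) atTop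
      (nhds (x + t₀ • (w - x))) := hxm.add (htm.smul (hzm.sub hxm))
  have heqfun : (fun i => xn (m i) + t (m i) • (z (m i) - xn (m i)))
      = fun i => yn (m i) := funext fun i => hteq (m i)
  rw [heqfun] at heqlim
  have heq : x + t₀ • (w - x) = y := tendsto_nhds_unique heqlim hym
  have ht₀pos : 0 < t₀ := by
    rcases ht₀.1.lt_or_eq with h | h
    · exact h
    · exfalso
      apply hne
      rw [← heq, ← h, zero_smul, add_zero]
  have ht₁pos : 0 < t₁ := by
    rcases ht₁.1.lt_or_eq with h | h
    · exact h
    · exfalso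
      apply hne
      rw [← ht₁eq, ← h, zero_smul, add_zero]
  have hkey : t₀ • (w - x) = t₁ • (zD - x) := by
    have h1 : t₀ • (w - x) = y - x := by rw [← heq]; abel
    have h2 : t₁ • (zD - x) = y - x := by rw [← ht₁eq]; abel
    rw [h1, h2]
  have hzDni : zD ∉ interior D := by
    have h := hzD.1
    rw [← closure_diff_interior] at h
    exact h.2
  have hwzD : w = zD :=
    ray_unique hDconv hx (subset_closure hwD) hwni
      (subset_closure (hD.isClosed.frontier_subset hzD.1)) hzDni ht₀pos ht₁pos hkey
  refine ⟨fun i => φ (ψ i), ?_⟩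
  rw [← hwzD]
  exact hzm
end
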